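/- arXiv:1606.04218 — 4 statements merged into one kernel-verified Lean document; each statement's English description precedes it below -/
import Mathlib

section
/- Let X be a compact metric space, H a real Hilbert space, and φ : X → H a continuous map. Assume the kernel is universal in the sense that the set of functions {x ↦ ⟨f, φ(x)⟩_H : f ∈ H} is dense in the space C(X, ℝ) of continuous real functions on X with respect to the supremum norm. Let p and q be Borel probability measures on X, and let μ_p = ∫ φ dp and μ_q = ∫ φ dq denote the Bochner integrals (kernel mean embeddings). Then: (i) sup over f ∈ H with ‖f‖ ≤ 1 of (∫ ⟨f, φ(x)⟩ dp(x) − ∫ ⟨f, φ(x)⟩ dq(x)) equals ‖μ_p − μ_q‖_H; and (ii) this quantity equals 0 if and only if p = q. -/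
open MeasureTheory

/-- MMD with universal kernel: the sup over the unit ball equals the norm of the
difference of kernel mean embeddings, and it vanishes iff the measures coincide. -/
theorem mmd_eq_norm_mean_embedding_diff_and_zero_iff_eq
    {X : Type*} [MetricSpace X] [CompactSpace X] [MeasurableSpace X] [BorelSpace X]
    {H : Type*} [NormedAddCommGroup H] [InnerProductSpace ℝ H] [CompleteSpace H]
    (φ : X → H) (hφ : Continuous φ)
    (huniv : DenseRange (fun f : H =>
      (⟨fun x => (inner ℝ f (φ x) : ℝ), continuous_const.inner hφ⟩ : C(X, ℝ))))
    (p q : Measure X) [IsProbabilityMeasure p] [IsProbabilityMeasure q] :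
    sSup {r : ℝ | ∃ f : H, ‖f‖ ≤ 1 ∧
        r = (∫ x, (inner ℝ f (φ x) : ℝ) ∂p) - ∫ x, (inner ℝ f (φ x) : ℝ) ∂q}
      = ‖(∫ x, φ x ∂p) - ∫ x, φ x ∂q‖ ∧
    (‖(∫ x, φ x ∂p) - ∫ x, φ x ∂q‖ = 0 ↔ p = q) := by
  have hφint : ∀ (μ : Measure X) [IsProbabilityMeasure μ], Integrable φ μ := by
    intro μ _
    exact hφ.integrable_of_hasCompactSupport (HasCompactSupport.of_compactSpace φ)
  set D : H := (∫ x, φ x ∂p) - ∫ x, φ x ∂q with hD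
  -- the linear functional value
  have key : ∀ f : H,
      (∫ x, (inner ℝ f (φ x) : ℝ) ∂p) - ∫ x, (inner ℝ f (φ x) : ℝ) ∂q = inner ℝ f D := by
    intro f
    rw [integral_inner (hφint p) f, integral_inner (hφint q) f, hD, inner_sub_right]
  constructor
  · -- sSup equals ‖D‖
    apply IsGreatest.csSup_eq
    constructor
    · -- ‖D‖ is in the set
      by_cases h : D = 0
      · exact ⟨0, by simp, by simp [key 0, h]⟩
      · refine ⟨‖D‖⁻¹ • D, ?_, ?_⟩
        · simp [norm_smul, abs_of_nonneg, inv_mul_cancel₀ (norm_ne_zero_iff.mpr h)]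
        · rw [key, inner_smul_left, real_inner_self_eq_norm_mul_norm]
          simp [RCLike.conj_to_real]
          field_simp
      -- upper bound
    · rintro r ⟨f, hf, rfl⟩
      rw [key]
      calc (inner ℝ f D : ℝ) ≤ ‖f‖ * ‖D‖ := real_inner_le_norm f D
        _ ≤ 1 * ‖D‖ := by gcongr
        _ = ‖D‖ := one_mul _
  · constructor
    · intro h0
      -- D = 0, hence equal integrals of inner functions, then of all continuous functions
      have hD0 : D = 0 := norm_eq_zero.mp h0
      have hinner : ∀ f : H,
          (∫ x, (inner ℝ f (φ x) : ℝ) ∂p) = ∫ x, (inner ℝ f (φ x) : ℝ) ∂q := by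
        intro f
        have := key f
        rw [hD0, inner_zero_right, sub_eq_zero] at this
        exact this
      have hcont : ∀ g : C(X, ℝ), (∫ x, g x ∂p) = ∫ x, g x ∂q := by
        intro g
        have hgi : ∀ (μ : Measure X) [IsProbabilityMeasure μ] (h : C(X, ℝ)),
            Integrable (fun x => h x) μ := fun μ _ h =>
          h.continuous.integrable_of_hasCompactSupport
            (HasCompactSupport.of_compactSpace _)
        have : ∀ ε > 0, |(∫ x, g x ∂p) - ∫ x, g x ∂q| ≤ 2 * ε := by
          intro ε hε
          obtain ⟨f, hf⟩ := Metric.denseRange_iff.mp huniv g ε hε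
          set fφ : C(X, ℝ) :=
            ⟨fun x => (inner ℝ f (φ x) : ℝ), continuous_const.inner hφ⟩ with hfφ
          have hfb : ∀ x : X, |g x - (inner ℝ f (φ x) : ℝ)| ≤ ε := by
            intro x
            have h1 : dist (fφ x) (g x) ≤ dist fφ g := ContinuousMap.dist_apply_le_dist x
            have := h1.trans ((dist_comm fφ g ▸ hf).le)
            rw [Real.dist_eq, abs_sub_comm] at this
            exact this
          have hfφi : ∀ (μ : Measure X) [IsProbabilityMeasure μ],
              Integrable (fun x => (inner ℝ f (φ x) : ℝ)) μ := fun μ _ =>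
            (continuous_const.inner hφ).integrable_of_hasCompactSupport
              (HasCompactSupport.of_compactSpace _)
          have hbound : ∀ (μ : Measure X) [IsProbabilityMeasure μ],
              |(∫ x, g x ∂μ) - ∫ x, (inner ℝ f (φ x) : ℝ) ∂μ| ≤ ε := by
            intro μ _
            rw [← integral_sub (hgi μ g) (hfφi μ)]
            calc |∫ x, (g x - (inner ℝ f (φ x) : ℝ)) ∂μ|
                ≤ ∫ x, |g x - (inner ℝ f (φ x) : ℝ)| ∂μ := by
                  simpa [Real.norm_eq_abs] using
                    norm_integral_le_integral_norm (fun x => g x - (inner ℝ f (φ x) : ℝ)) (μ := μ)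
              _ ≤ ∫ _x, ε ∂μ := by
                  apply integral_mono ((hgi μ g).sub (hfφi μ)).abs
                    (integrable_const ε) hfb
              _ = ε := by simp
          calc |(∫ x, g x ∂p) - ∫ x, g x ∂q|
              = |((∫ x, g x ∂p) - ∫ x, (inner ℝ f (φ x) : ℝ) ∂p)
                  + ((∫ x, (inner ℝ f (φ x) : ℝ) ∂q) - ∫ x, g x ∂q)| := by
                rw [hinner f]; ring_nf
            _ ≤ |(∫ x, g x ∂p) - ∫ x, (inner ℝ f (φ x) : ℝ) ∂p|
                  + |(∫ x, (inner ℝ f (φ x) : ℝ) ∂q) - ∫ x, g x ∂q| := abs_add_le _ _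
            _ ≤ ε + ε := by
                refine add_le_add (hbound p) ?_
                rw [abs_sub_comm]; exact hbound q
            _ = 2 * ε := by ring
        have habs : |(∫ x, g x ∂p) - ∫ x, g x ∂q| ≤ 0 := by
          apply le_of_forall_pos_le_add
          intro ε hε
          calc |(∫ x, g x ∂p) - ∫ x, g x ∂q| ≤ 2 * (ε / 2) := this (ε / 2) (by linarith)
            _ = 0 + ε := by ring
        exact sub_eq_zero.mp (abs_eq_zero.mp (le_antisymm habs (abs_nonneg _)))
      apply ext_of_forall_lintegral_eq_of_IsFiniteMeasure
      intro f
      have hgi : ∀ (μ : Measure X) [IsProbabilityMeasure μ],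
          Integrable (fun x => (f x : ℝ)) μ :=
        fun μ _ => (NNReal.continuous_coe.comp f.continuous).integrable_of_hasCompactSupport
          (HasCompactSupport.of_compactSpace _)
      rw [lintegral_coe_eq_integral _ (hgi p), lintegral_coe_eq_integral _ (hgi q)]
      congr 1
      exact hcont ⟨fun x => (f x : ℝ), NNReal.continuous_coe.comp f.continuous⟩
    · intro h
      rw [hD, h, sub_self, norm_zero]
end

section
/- Let X be a set, G and H real Hilbert spaces, φ : X → G a map, Y a compact metric space, and ψ : Y → H a continuous map such that the set {y ↦ ⟨h, ψ(y)⟩_H : h ∈ H} is dense in C(Y, ℝ) with respect to the supremum norm. Let P and Q assign to each x ∈ X a Borel probability measure P(·|x) and Q(·|x) on Y. Suppose there exist continuous linear operators C_P : G → H and C_Q : G → H such that for every x ∈ X, C_P(φ(x)) = ∫ ψ(y) dP(y|x) and C_Q(φ(x)) = ∫ ψ(y) dQ(y|x) (Bochner integrals, the conditional mean embeddings). If C_P = C_Q, then for every x ∈ X, P(·|x) = Q(·|x). -/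
open MeasureTheory
open scoped NNReal ENNReal

lemma integrable_of_continuous_compact {Y : Type*} [MetricSpace Y] [CompactSpace Y]
    [MeasurableSpace Y] [BorelSpace Y] {E : Type*} [NormedAddCommGroup E]
    (μ : Measure Y) [IsFiniteMeasure μ] {f : Y → E} (hf : Continuous f) :
    Integrable f μ :=
  hf.integrable_of_hasCompactSupport (IsCompact.of_isClosed_subset isCompact_univ
    (isClosed_tsupport f) (Set.subset_univ _))

lemma continuous_integral_contMap {Y : Type*} [MetricSpace Y] [CompactSpace Y]
    [MeasurableSpace Y] [BorelSpace Y] (μ : Measure Y) [IsProbabilityMeasure μ] :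
    Continuous fun f : C(Y, ℝ) => ∫ y, f y ∂μ := by
  have : LipschitzWith 1 fun f : C(Y, ℝ) => ∫ y, f y ∂μ := by
    apply LipschitzWith.of_dist_le_mul
    intro f g
    rw [NNReal.coe_one, one_mul, dist_eq_norm, dist_eq_norm]
    rw [← integral_sub (integrable_of_continuous_compact μ f.continuous)
      (integrable_of_continuous_compact μ g.continuous)]
    calc ‖∫ y, (f y - g y) ∂μ‖ ≤ ‖f - g‖ * (μ Set.univ).toReal :=
          norm_integral_le_of_norm_le_const (Filter.Eventually.of_forall (fun y => by
            simpa using ContinuousMap.norm_coe_le_norm (f - g) y))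
      _ = ‖f - g‖ := by simp
  exact this.continuous

/-- Equality of conditional embedding operators implies equality of the conditional
distributions, when the kernel on the output space `Y` is universal. -/
theorem condDist_eq_of_condEmbedding_eq
    {X : Type*} {G : Type*} [NormedAddCommGroup G] [InnerProductSpace ℝ G] [CompleteSpace G]
    {H : Type*} [NormedAddCommGroup H] [InnerProductSpace ℝ H] [CompleteSpace H]
    (φ : X → G)
    {Y : Type*} [MetricSpace Y] [CompactSpace Y] [MeasurableSpace Y] [BorelSpace Y]
    (ψ : Y → H) (hψ : Continuous ψ)
    (huniv : DenseRange (fun h : H =>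
      (⟨fun y => (inner ℝ h (ψ y) : ℝ), continuous_const.inner hψ⟩ : C(Y, ℝ))))
    (P Q : X → Measure Y)
    (hP : ∀ x, IsProbabilityMeasure (P x)) (hQ : ∀ x, IsProbabilityMeasure (Q x))
    (CP CQ : G →L[ℝ] H)
    (hCP : ∀ x, CP (φ x) = ∫ y, ψ y ∂(P x))
    (hCQ : ∀ x, CQ (φ x) = ∫ y, ψ y ∂(Q x))
    (hEq : CP = CQ) :
    ∀ x, P x = Q x := by
  intro x
  have hPx := hP x
  have hQx := hQ x
  -- mean embeddings agree
  have hmean : (∫ y, ψ y ∂(P x)) = ∫ y, ψ y ∂(Q x) := by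
    rw [← hCP x, ← hCQ x, hEq]
  -- integrals of kernel sections agree
  have hinner : ∀ h : H, (∫ y, (inner ℝ h (ψ y) : ℝ) ∂(P x)) = ∫ y, (inner ℝ h (ψ y) : ℝ) ∂(Q x) := by
    intro h
    rw [integral_inner (integrable_of_continuous_compact _ hψ) h,
      integral_inner (integrable_of_continuous_compact _ hψ) h, hmean]
  -- integrals of all continuous functions agree
  have hcont : ∀ f : C(Y, ℝ), (∫ y, f y ∂(P x)) = ∫ y, f y ∂(Q x) := by
    have hclosed : IsClosed {f : C(Y, ℝ) | (∫ y, f y ∂(P x)) = ∫ y, f y ∂(Q x)} :=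
      isClosed_eq (continuous_integral_contMap _) (continuous_integral_contMap _)
    have hsub : Set.range (fun h : H =>
        (⟨fun y => (inner ℝ h (ψ y) : ℝ), continuous_const.inner hψ⟩ : C(Y, ℝ))) ⊆
        {f : C(Y, ℝ) | (∫ y, f y ∂(P x)) = ∫ y, f y ∂(Q x)} := by
      rintro _ ⟨h, rfl⟩
      exact hinner h
    exact fun f => hclosed.closure_subset_iff.mpr hsub (huniv f)
  -- conclude via lintegrals of bounded continuous ℝ≥0 functions
  apply ext_of_forall_lintegral_eq_of_IsFiniteMeasure
  intro f
  have hfc : Continuous fun y => ((f y : ℝ≥0) : ℝ) := by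
    exact NNReal.continuous_coe.comp f.continuous
  rw [lintegral_coe_eq_integral _ (integrable_of_continuous_compact _ hfc),
    lintegral_coe_eq_integral _ (integrable_of_continuous_compact _ hfc)]
  congr 1
  exact hcont ⟨fun y => ((f y : ℝ≥0) : ℝ), hfc⟩
end

section
/- Let λ > 0 be real and let Φ_d ∈ ℝ^{p×N}, Υ_d ∈ ℝ^{q×N}, Φ_s ∈ ℝ^{p×M}, Υ_s ∈ ℝ^{q×M} be real matrices. Define K_d = Υ_dᵀΥ_d, K_s = Υ_sᵀΥ_s, L_d = Φ_dᵀΦ_d, L_s = Φ_sᵀΦ_s, K_{sd} = Υ_sᵀΥ_d, L_{ds} = Φ_dᵀΦ_s, K̃_d = K_d + λI_N, and K̃_s = K_s + λI_M. Then K̃_d and K̃_s are invertible, and the squared Frobenius norm satisfies ‖Φ_d K̃_d⁻¹ Υ_dᵀ − Φ_s K̃_s⁻¹ Υ_sᵀ‖²_F = Tr(K_d K̃_d⁻¹ L_d K̃_d⁻¹) + Tr(K_s K̃_s⁻¹ L_s K̃_s⁻¹) − 2 · Tr(K_{sd} K̃_d⁻¹ L_{ds} K̃_s⁻¹). -/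
open Matrix

lemma reg_gram_posdef {q n : ℕ} {lam : ℝ} (hlam : 0 < lam) (Υ : Matrix (Fin q) (Fin n) ℝ) :
    (Υᵀ * Υ + lam • (1 : Matrix (Fin n) (Fin n) ℝ)).PosDef := by
  have h1 : (lam • (1 : Matrix (Fin n) (Fin n) ℝ)).PosDef := by
    rw [smul_one_eq_diagonal]
    exact Matrix.posDef_diagonal_iff.mpr fun i => hlam
  have h2 : (Υᵀ * Υ).PosSemidef := by
    simpa using Matrix.posSemidef_conjTranspose_mul_self Υ
  exact Matrix.PosDef.posSemidef_add h2 h1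

/-- The empirical CMMD objective: the squared Frobenius norm (`Tr (AᵀA)`) of the
difference of two empirical conditional embedding operators, expressed purely in terms
of kernel Gram matrices. Also, the regularized Gram matrices are invertible. -/
theorem cmmd_sq_eq_trace_form
    {p q N M : ℕ} {lam : ℝ} (hlam : 0 < lam)
    (Φd : Matrix (Fin p) (Fin N) ℝ) (Υd : Matrix (Fin q) (Fin N) ℝ)
    (Φs : Matrix (Fin p) (Fin M) ℝ) (Υs : Matrix (Fin q) (Fin M) ℝ)
    (Kd : Matrix (Fin N) (Fin N) ℝ) (Ks : Matrix (Fin M) (Fin M) ℝ)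
    (Ld : Matrix (Fin N) (Fin N) ℝ) (Ls : Matrix (Fin M) (Fin M) ℝ)
    (Ksd : Matrix (Fin M) (Fin N) ℝ) (Lds : Matrix (Fin N) (Fin M) ℝ)
    (Ktd : Matrix (Fin N) (Fin N) ℝ) (Kts : Matrix (Fin M) (Fin M) ℝ)
    (hKd : Kd = Υdᵀ * Υd) (hKs : Ks = Υsᵀ * Υs)
    (hLd : Ld = Φdᵀ * Φd) (hLs : Ls = Φsᵀ * Φs)
    (hKsd : Ksd = Υsᵀ * Υd) (hLds : Lds = Φdᵀ * Φs)
    (hKtd : Ktd = Kd + lam • (1 : Matrix (Fin N) (Fin N) ℝ))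
    (hKts : Kts = Ks + lam • (1 : Matrix (Fin M) (Fin M) ℝ)) :
    IsUnit Ktd ∧ IsUnit Kts ∧
    ((Φd * Ktd⁻¹ * Υdᵀ - Φs * Kts⁻¹ * Υsᵀ)ᵀ *
        (Φd * Ktd⁻¹ * Υdᵀ - Φs * Kts⁻¹ * Υsᵀ)).trace
      = (Kd * Ktd⁻¹ * Ld * Ktd⁻¹).trace + (Ks * Kts⁻¹ * Ls * Kts⁻¹).trace
        - 2 * (Ksd * Ktd⁻¹ * Lds * Kts⁻¹).trace := by
  have hpd : Ktd.PosDef := by rw [hKtd, hKd]; exact reg_gram_posdef hlam Υd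
  have hps : Kts.PosDef := by rw [hKts, hKs]; exact reg_gram_posdef hlam Υs
  have hud : IsUnit Ktd := hpd.isUnit
  have hus : IsUnit Kts := hps.isUnit
  refine ⟨hud, hus, ?_⟩
  -- symmetry of inverses
  have hsd : Ktd⁻¹ᵀ = Ktd⁻¹ := by
    rw [transpose_nonsing_inv]
    congr 1
    simpa using hpd.isHermitian.eq
  have hss : Kts⁻¹ᵀ = Kts⁻¹ := by
    rw [transpose_nonsing_inv]
    congr 1
    simpa using hps.isHermitian.eq
  set A := Φd * Ktd⁻¹ * Υdᵀ with hA
  set B := Φs * Kts⁻¹ * Υsᵀ with hB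
  have expand : ((A - B)ᵀ * (A - B)).trace
      = (Aᵀ * A).trace + (Bᵀ * B).trace - 2 * (Aᵀ * B).trace := by
    have hBA : (Bᵀ * A).trace = (Aᵀ * B).trace := by
      rw [← trace_transpose (Bᵀ * A), transpose_mul, transpose_transpose]
    rw [transpose_sub, Matrix.sub_mul, Matrix.mul_sub, Matrix.mul_sub, trace_sub,
      trace_sub, trace_sub, hBA]
    ring
  rw [expand]
  have h1 : (Aᵀ * A).trace = (Kd * Ktd⁻¹ * Ld * Ktd⁻¹).trace := by
    have e : Aᵀ * A = Υd * ((Ktd⁻¹ * Ld * Ktd⁻¹) * Υdᵀ) := by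
      rw [hA, hLd]; simp [transpose_mul, hsd, Matrix.mul_assoc]
    rw [e, trace_mul_comm, Matrix.mul_assoc, ← hKd, trace_mul_comm,
      ← Matrix.mul_assoc, ← Matrix.mul_assoc]
  have h2 : (Bᵀ * B).trace = (Ks * Kts⁻¹ * Ls * Kts⁻¹).trace := by
    have e : Bᵀ * B = Υs * ((Kts⁻¹ * Ls * Kts⁻¹) * Υsᵀ) := by
      rw [hB, hLs]; simp [transpose_mul, hss, Matrix.mul_assoc]
    rw [e, trace_mul_comm, Matrix.mul_assoc, ← hKs, trace_mul_comm,
      ← Matrix.mul_assoc, ← Matrix.mul_assoc]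
  have h3 : (Aᵀ * B).trace = (Ksd * Ktd⁻¹ * Lds * Kts⁻¹).trace := by
    have e : Aᵀ * B = Υd * ((Ktd⁻¹ * Lds * Kts⁻¹) * Υsᵀ) := by
      rw [hA, hB, hLds]; simp [transpose_mul, hsd, Matrix.mul_assoc]
    rw [e, trace_mul_comm, Matrix.mul_assoc, ← hKsd, trace_mul_comm,
      ← Matrix.mul_assoc, ← Matrix.mul_assoc]
  rw [h1, h2, h3]
end

section
/- Let (Ω, 𝒜, P) be a probability space, X : Ω → Fin K a measurable random variable with P(X = j) > 0 for every j ∈ Fin K, H a real Hilbert space, and ψ : Ω → H a Bochner-integrable map. Define the linear operator C_{YX} : ℝ^K → H by C_{YX}(v) = ∫_Ω v_{X(ω)} · ψ(ω) dP(ω), and let C_{XX} : ℝ^K → ℝ^K be the diagonal operator with j-th diagonal entry P(X = j) (which is invertible). Then for every j ∈ Fin K, (C_{YX} ∘ C_{XX}⁻¹)(e_j) = (1 / P(X = j)) · ∫_{{X = j}} ψ dP, i.e., the conditional embedding operator C_{YX} C_{XX}⁻¹ maps the one-hot vector e_j to the conditional expectation of ψ given the event {X = j}. -/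
open MeasureTheory

/-- For a finite conditioning domain with the Kronecker delta kernel (one-hot feature
map), the conditional embedding operator `C_{YX} C_{XX}⁻¹` maps the one-hot vector
`e_j` to the conditional expectation of `ψ` given the event `{X = j}`. -/
theorem condEmbedding_one_hot_eq_condexp
    {Ω : Type*} [MeasurableSpace Ω] (P : Measure Ω) [IsProbabilityMeasure P]
    {K : ℕ} (X : Ω → Fin K) (hX : Measurable X)
    (hpos : ∀ j : Fin K, 0 < P {ω | X ω = j})
    {H : Type*} [NormedAddCommGroup H] [InnerProductSpace ℝ H] [CompleteSpace H]
    (ψ : Ω → H) (hψ : Integrable ψ P)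
    (CYX : (Fin K → ℝ) → H) (hCYX : ∀ v, CYX v = ∫ ω, v (X ω) • ψ ω ∂P)
    (CXX : Matrix (Fin K) (Fin K) ℝ)
    (hCXX : CXX = Matrix.diagonal fun j : Fin K => (P {ω | X ω = j}).toReal) :
    IsUnit CXX ∧
    ∀ j : Fin K, CYX (CXX⁻¹.mulVec (Pi.single j 1)) =
      ((P {ω | X ω = j}).toReal)⁻¹ • ∫ ω in {ω | X ω = j}, ψ ω ∂P := by
  have hp : ∀ j : Fin K, (0 : ℝ) < (P {ω | X ω = j}).toReal := fun j =>
    ENNReal.toReal_pos (hpos j).ne' (measure_ne_top P _)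
  have hdet : IsUnit CXX.det := by
    rw [hCXX, Matrix.det_diagonal]
    exact isUnit_iff_ne_zero.2 (Finset.prod_pos fun j _ => hp j).ne'
  refine ⟨(Matrix.isUnit_iff_isUnit_det _).2 hdet, fun j => ?_⟩
  have hinv : CXX⁻¹ = Matrix.diagonal fun j : Fin K =>
      ((P {ω | X ω = j}).toReal)⁻¹ := by
    apply Matrix.inv_eq_right_inv
    rw [hCXX, Matrix.diagonal_mul_diagonal]
    convert Matrix.diagonal_one with i
    exact mul_inv_cancel₀ (hp i).ne'
  have hvec : CXX⁻¹.mulVec (Pi.single j 1) =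
      Pi.single j (((P {ω | X ω = j}).toReal)⁻¹) := by
    funext i
    rw [hinv, Matrix.mulVec_diagonal]
    by_cases h : i = j
    · subst h; simp
    · simp [Pi.single_eq_of_ne h]
  rw [hvec, hCYX]
  have hmeas : MeasurableSet {ω | X ω = j} := hX (measurableSet_singleton j)
  have hfun : (fun ω => (Pi.single j (((P {ω | X ω = j}).toReal)⁻¹) : Fin K → ℝ) (X ω) • ψ ω)
      = Set.indicator {ω | X ω = j}
        (fun ω => ((P {ω | X ω = j}).toReal)⁻¹ • ψ ω) := by
    funext ω
    by_cases h : X ω = j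
    · rw [h, Pi.single_eq_same, Set.indicator_of_mem (show ω ∈ {ω | X ω = j} from h)]
    · rw [Pi.single_eq_of_ne h, Set.indicator_of_notMem (show ω ∉ {ω | X ω = j} from h),
        zero_smul]
  rw [hfun, integral_indicator hmeas, integral_smul]
end
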